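/- For any v ∈ V: (i) if (x,u) ∈ 𝒢_+, then |x − r(x,u)| ≤ v if and only if ( x < d(v), or ( x = d(v) and h_+(x,u) ≤ h_v ) ); (ii) if (x,u) ∈ 𝒢_−, then |x − r(x,u)| ≤ v if and only if ( x > c(v), or ( x = c(v) and h_−(x,u) ≤ h_v ) ). -/

import Mathlib

open MeasureTheory ProbabilityTheory Set Filter Function
open scoped ENNReal NNReal Topology

noncomputable section

namespace PinelisTtest

variable {Ω : Type*} [MeasurableSpace Ω]

/-- The function `G` from the paper: `G x = E[X 1{X ∈ (0,x]}]` for `x ≥ 0`,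
`G x = E[(-X) 1{X ∈ [x,0)}]` for `x < 0`. -/
def G (P : Measure Ω) (X : Ω → ℝ) (x : ℝ) : ℝ :=
  if 0 ≤ x then ∫ ω, (if X ω ∈ Set.Ioc (0:ℝ) x then X ω else 0) ∂P
  else ∫ ω, (if X ω ∈ Set.Ico x (0:ℝ) then -(X ω) else 0) ∂P

/-- `m := (1/2) E|X|`. -/
def mHalf (P : Measure Ω) (X : Ω → ℝ) : ℝ := (1/2) * ∫ ω, |X ω| ∂P

/-- `G` extended to `[-∞,∞]`, with `G(±∞) = m`. -/
def Gbar (P : Measure Ω) (X : Ω → ℝ) (x : EReal) : ℝ :=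
  if x = ⊤ ∨ x = ⊥ then mHalf P X else G P X x.toReal

/-- `x_+(h) := inf {x ∈ [0,∞] : G(x) ≥ h}`. -/
def xPlus (P : Measure Ω) (X : Ω → ℝ) (h : ℝ) : EReal :=
  sInf {x : EReal | 0 ≤ x ∧ h ≤ Gbar P X x}

/-- `x_-(h) := sup {x ∈ [-∞,0] : G(x) ≥ h}`. -/
def xMinus (P : Measure Ω) (X : Ω → ℝ) (h : ℝ) : EReal :=
  sSup {x : EReal | x ≤ 0 ∧ h ≤ Gbar P X x}

/-- `w(h) := x_+(h) - x_-(h)`. -/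
def wFun (P : Measure Ω) (X : Ω → ℝ) (h : ℝ) : EReal := xPlus P X h - xMinus P X h

/-- `V := {w(h) : h ∈ (0,m]}`. -/
def V (P : Measure Ω) (X : Ω → ℝ) : Set EReal := wFun P X '' Set.Ioc 0 (mHalf P X)

/-- `h_+(x,u) := G(x-) + u (G(x) - G(x-))`. -/
def hPlus (P : Measure Ω) (X : Ω → ℝ) (x u : ℝ) : ℝ :=
  leftLim (G P X) x + u * (G P X x - leftLim (G P X) x)

/-- `h_-(x,u) := G(x+) + u (G(x) - G(x+))`. -/
def hMinus (P : Measure Ω) (X : Ω → ℝ) (x u : ℝ) : ℝ :=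
  rightLim (G P X) x + u * (G P X x - rightLim (G P X) x)

/-- `H(x,u)`. -/
def H (P : Measure Ω) (X : Ω → ℝ) (x u : ℝ) : ℝ :=
  if 0 ≤ x then hPlus P X x u else hMinus P X x u

/-- The reciprocating function `r(x,u)` (real-valued; the extended value is converted
by `EReal.toReal`, which only matters off the almost-sure good set). -/
def recip (P : Measure Ω) (X : Ω → ℝ) (x u : ℝ) : ℝ :=
  if 0 ≤ x then (xMinus P X (H P X x u)).toReal else (xPlus P X (H P X x u)).toReal

/-- `U_X(ω) := U(ω)` if `P(X = X(ω)) ≠ 0`, and `:= 1` otherwise. -/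
def UX (P : Measure Ω) (X U : Ω → ℝ) (ω : Ω) : ℝ :=
  if P {ω' | X ω' = X ω} ≠ 0 then U ω else 1

/-- `W := |X - r(X, U_X)|`. -/
def W (P : Measure Ω) (X U : Ω → ℝ) (ω : Ω) : ℝ :=
  |X ω - recip P X (X ω) (UX P X U ω)|

/-- `Y := |X ⬝ r(X, U_X)|`. -/
def Yf (P : Measure Ω) (X U : Ω → ℝ) (ω : Ω) : ℝ :=
  |X ω * recip P X (X ω) (UX P X U ω)|

/-- `U` is uniformly distributed on `[0,1]`. -/
def IsUniform01 (P : Measure Ω) (U : Ω → ℝ) : Prop :=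
  P.map U = volume.restrict (Set.Icc (0:ℝ) 1)

/-- `M_+`. -/
def Mplus (P : Measure Ω) (X : Ω → ℝ) : Set ℝ :=
  {x | 0 < x ∧ ∀ y < x, 0 < P {ω | X ω ∈ Set.Ioc y x}}

/-- `N_+`. -/
def Nplus (P : Measure Ω) (X : Ω → ℝ) : Set ℝ :=
  {x | 0 < x ∧ P {ω | X ω = x} = 0}

/-- `L_+`. -/
def Lplus (P : Measure Ω) (X : Ω → ℝ) : Set ℝ :=
  {x | 0 < x ∧ ∃ y, 0 ≤ y ∧ y < x ∧ P {ω | X ω ∈ Set.Ioo y x} = 0}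

/-- `M_-`. -/
def Mminus (P : Measure Ω) (X : Ω → ℝ) : Set ℝ :=
  {x | x < 0 ∧ ∀ y, x < y → 0 < P {ω | X ω ∈ Set.Ico x y}}

/-- `N_-`. -/
def Nminus (P : Measure Ω) (X : Ω → ℝ) : Set ℝ :=
  {x | x < 0 ∧ P {ω | X ω = x} = 0}

/-- `L_-`. -/
def Lminus (P : Measure Ω) (X : Ω → ℝ) : Set ℝ :=
  {x | x < 0 ∧ ∃ y, x < y ∧ y ≤ 0 ∧ P {ω | X ω ∈ Set.Ioo x y} = 0}

/-- `𝒢_+`. -/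
def Gplus (P : Measure Ω) (X : Ω → ℝ) : Set (ℝ × ℝ) :=
  {p | p.1 ∈ Mplus P X ∧ 0 ≤ p.2 ∧ p.2 ≤ 1 ∧
    (p.1 ∈ Nplus P X → p.2 = 1) ∧ (p.1 ∈ Lplus P X → 0 < p.2) ∧
    (P {ω | p.1 < X ω} = 0 → p.1 ∉ Nplus P X ∧ p.2 < 1)}

/-- `𝒢_-`. -/
def Gminus (P : Measure Ω) (X : Ω → ℝ) : Set (ℝ × ℝ) :=
  {p | p.1 ∈ Mminus P X ∧ 0 ≤ p.2 ∧ p.2 ≤ 1 ∧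
    (p.1 ∈ Nminus P X → p.2 = 1) ∧ (p.1 ∈ Lminus P X → 0 < p.2) ∧
    (P {ω | X ω < p.1} = 0 → p.1 ∉ Nminus P X ∧ p.2 < 1)}

/-- `𝒢 := 𝒢_+ ∪ 𝒢_-`. -/
def Gset (P : Measure Ω) (X : Ω → ℝ) : Set (ℝ × ℝ) := Gplus P X ∪ Gminus P X


/-- `h_v := sup {h ∈ (0,m] : w(h) ≤ v}`. -/
def hOf (P : Measure Ω) (X : Ω → ℝ) (v : EReal) : ℝ :=
  sSup {h : ℝ | h ∈ Set.Ioc 0 (mHalf P X) ∧ wFun P X h ≤ v}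

set_option linter.unusedSectionVars false

section Aux

variable (P : Measure Ω) [IsProbabilityMeasure P] (X : Ω → ℝ)

/-- integral of `f` over the preimage of a set, as indicator integral. -/
def J (f : Ω → ℝ) (s : Set ℝ) : ℝ := ∫ ω, (X ⁻¹' s).indicator f ω ∂P

variable {P X}

lemma G_pos_eq {x : ℝ} (hx : 0 ≤ x) : G P X x = J P X X (Set.Ioc 0 x) := by
  rw [G, if_pos hx, J]
  congr 1 with ω
  by_cases h : X ω ∈ Set.Ioc (0:ℝ) x <;> simp [Set.indicator, h]

lemma G_neg_eq {x : ℝ} (hx : x < 0) : G P X x = J P X (fun ω => -X ω) (Set.Ico x 0) := by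
  rw [G, if_neg (not_le.mpr hx), J]
  congr 1 with ω
  by_cases h : X ω ∈ Set.Ico x (0:ℝ) <;> simp [Set.indicator, h]

section Jlemmas

variable (hXm : Measurable X) (hXint : Integrable X P)

include hXm hXint

lemma J_integrable {f : Ω → ℝ} (hf : Integrable f P) {s : Set ℝ} (hs : MeasurableSet s) :
    Integrable ((X ⁻¹' s).indicator f) P := hf.indicator (hXm hs)

lemma J_mono {f : Ω → ℝ} (hf : Integrable f P) {s t : Set ℝ} (hs : MeasurableSet s)
    (ht : MeasurableSet t) (hst : s ⊆ t) (hpos : ∀ ω, X ω ∈ t → 0 ≤ f ω) :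
    J P X f s ≤ J P X f t := by
  refine integral_mono (J_integrable hXm hXint hf hs) (J_integrable hXm hXint hf ht) ?_
  intro ω
  simp only [Set.indicator]
  by_cases h : ω ∈ X ⁻¹' s
  · rw [if_pos h, if_pos (show ω ∈ X ⁻¹' t from hst h)]
  · rw [if_neg h]
    by_cases h' : ω ∈ X ⁻¹' t
    · rw [if_pos h']; exact hpos ω h'
    · rw [if_neg h']

lemma J_nonneg {f : Ω → ℝ} {s : Set ℝ} (hpos : ∀ ω, X ω ∈ s → 0 ≤ f ω) :
    0 ≤ J P X f s := by
  refine integral_nonneg fun ω => ?_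
  by_cases h : X ω ∈ s <;> simp [Set.indicator, h]
  exact hpos ω h

lemma J_pos {f : Ω → ℝ} (hf : Integrable f P) {s : Set ℝ} (hs : MeasurableSet s)
    (hpos : ∀ ω, X ω ∈ s → 0 < f ω) (hP : P (X ⁻¹' s) ≠ 0) :
    0 < J P X f s := by
  have h0 : 0 ≤ᶠ[MeasureTheory.ae P] (X ⁻¹' s).indicator f :=
    Filter.Eventually.of_forall fun ω =>
      Set.indicator_nonneg (fun a ha => (hpos a ha).le) ω
  rw [J, integral_pos_iff_support_of_nonneg_ae h0 (J_integrable hXm hXint hf hs)]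
  refine lt_of_lt_of_le ?_ (measure_mono (fun ω (hω : ω ∈ X ⁻¹' s) => ?_))
  · exact hP.bot_lt
  · simp only [Function.mem_support, Set.indicator, if_pos hω]
    exact (hpos ω hω).ne'

lemma J_union {f : Ω → ℝ} (hf : Integrable f P) {s t : Set ℝ} (hs : MeasurableSet s)
    (ht : MeasurableSet t) (hst : Disjoint s t) :
    J P X f (s ∪ t) = J P X f s + J P X f t := by
  rw [J, J, J, Set.preimage_union, Set.indicator_union_of_disjoint (hst.preimage X) f]
  exact integral_add (J_integrable hXm hXint hf hs) (J_integrable hXm hXint hf ht)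

lemma J_null {f : Ω → ℝ} {s : Set ℝ} (hP : P (X ⁻¹' s) = 0) : J P X f s = 0 := by
  rw [J]
  refine integral_eq_zero_of_ae ?_
  filter_upwards [measure_eq_zero_iff_ae_notMem.mp hP] with ω hω
  simp [Set.indicator_of_notMem hω]

end Jlemmas

end Aux
section Aux2

variable {P : Measure Ω} [IsProbabilityMeasure P] {X : Ω → ℝ}

lemma ind_mem {s : Set ℝ} (f : Ω → ℝ) {ω : Ω} (h : X ω ∈ s) :
    (X ⁻¹' s).indicator f ω = f ω := Set.indicator_of_mem (show ω ∈ X ⁻¹' s from h) f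

lemma ind_not_mem {s : Set ℝ} (f : Ω → ℝ) {ω : Ω} (h : X ω ∉ s) :
    (X ⁻¹' s).indicator f ω = 0 := Set.indicator_of_notMem (show ω ∉ X ⁻¹' s from h) f

lemma ind_abs_le {s : Set ℝ} (f : Ω → ℝ) (ω : Ω) :
    |(X ⁻¹' s).indicator f ω| ≤ |f ω| := by
  by_cases h : X ω ∈ s
  · rw [ind_mem f h]
  · rw [ind_not_mem f h]; simp


variable (hXm : Measurable X) (hXint : Integrable X P)
  (hXmean : ∫ ω, X ω ∂P = 0)

include hXm hXint hXmean

lemma m_eq_pos : mHalf P X = ∫ ω, max (X ω) 0 ∂P := by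
  have h1 : (fun ω => |X ω|) = fun ω => 2 * max (X ω) 0 - X ω := by
    funext ω
    rcases le_total (X ω) 0 with h | h
    · rw [abs_of_nonpos h, max_eq_right h]; ring
    · rw [abs_of_nonneg h, max_eq_left h]; ring
  have h2 : Integrable (fun ω => 2 * max (X ω) 0) P := (hXint.pos_part.const_mul 2)
  rw [mHalf, h1, integral_sub h2 hXint, hXmean, sub_zero, integral_const_mul]
  ring

lemma m_eq_J : mHalf P X = J P X X (Set.Ioi 0) := by
  rw [m_eq_pos hXm hXint hXmean, J]
  congr 1 with ω
  by_cases h : X ω ∈ Set.Ioi (0:ℝ)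
  · rw [ind_mem X h, max_eq_left (le_of_lt h)]
  · rw [ind_not_mem X h, max_eq_right (le_of_not_gt h)]

lemma m_eq_Jneg : mHalf P X = J P X (fun ω => -X ω) (Set.Iio 0) := by
  have h1 : (fun ω => (X ⁻¹' Set.Iio 0).indicator (fun ω => -X ω) ω)
      = fun ω => max (X ω) 0 - X ω := by
    funext ω
    by_cases h : X ω ∈ Set.Iio (0:ℝ)
    · rw [ind_mem _ h, max_eq_right (le_of_lt h)]; ring
    · rw [ind_not_mem _ h, max_eq_left (le_of_not_gt h)]; ring
  rw [J, h1, integral_sub hXint.pos_part hXint, hXmean, sub_zero,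
    m_eq_pos hXm hXint hXmean]

omit hXmean

lemma G_nonneg (x : ℝ) : 0 ≤ G P X x := by
  rcases le_or_gt 0 x with h | h
  · rw [G_pos_eq h]; exact J_nonneg hXm hXint fun ω hω => le_of_lt hω.1
  · rw [G_neg_eq h]
    exact J_nonneg hXm hXint fun ω hω => neg_nonneg.mpr (le_of_lt hω.2)

include hXmean in
lemma G_le_m (x : ℝ) : G P X x ≤ mHalf P X := by
  rcases le_or_gt 0 x with h | h
  · rw [G_pos_eq h, m_eq_J hXm hXint hXmean]
    exact J_mono hXm hXint hXint measurableSet_Ioc measurableSet_Ioi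
      Set.Ioc_subset_Ioi_self (fun ω hω => le_of_lt hω)
  · rw [G_neg_eq h, m_eq_Jneg hXm hXint hXmean]
    exact J_mono hXm hXint (hXint.neg) measurableSet_Ico measurableSet_Iio
      (fun y hy => hy.2) (fun ω hω => neg_nonneg.mpr (le_of_lt hω))

lemma G_zero : G P X 0 = 0 := by
  rw [G_pos_eq le_rfl]
  have : Set.Ioc (0:ℝ) 0 = ∅ := Set.Ioc_self 0
  rw [this, J]
  simp

lemma G_mono_pos {y x : ℝ} (hy : 0 ≤ y) (hyx : y ≤ x) : G P X y ≤ G P X x := by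
  rw [G_pos_eq hy, G_pos_eq (hy.trans hyx)]
  exact J_mono hXm hXint hXint measurableSet_Ioc measurableSet_Ioc
    (Set.Ioc_subset_Ioc_right hyx) (fun ω hω => le_of_lt hω.1)

lemma G_anti_neg {y x : ℝ} (hyx : y ≤ x) (hx : x ≤ 0) : G P X x ≤ G P X y := by
  rcases eq_or_lt_of_le hx with h0 | h0
  · subst h0
    rw [G_zero hXm hXint]
    exact G_nonneg hXm hXint y
  · rw [G_neg_eq h0, G_neg_eq (lt_of_le_of_lt hyx h0)]
    exact J_mono hXm hXint (hXint.neg) measurableSet_Ico measurableSet_Ico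
      (Set.Ico_subset_Ico_left hyx) (fun ω hω => neg_nonneg.mpr (le_of_lt hω.2))

/-- Left limit of `G` at `x > 0`. -/
lemma leftLim_G_eq {x : ℝ} (hx : 0 < x) :
    leftLim (G P X) x = J P X X (Set.Ioo 0 x) := by
  refine leftLim_eq_of_tendsto ?_
  have key : Tendsto (fun y => J P X X (Set.Ioc 0 y)) (nhdsWithin x (Set.Iio x))
      (nhds (J P X X (Set.Ioo 0 x))) := by
    refine tendsto_integral_filter_of_dominated_convergence (fun ω => |X ω|)
      (Filter.Eventually.of_forall fun y =>
        ((J_integrable hXm hXint hXint measurableSet_Ioc).aestronglyMeasurable)) ?_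
      hXint.abs ?_
    · refine Filter.Eventually.of_forall fun y => Filter.Eventually.of_forall fun ω => ?_
      exact ind_abs_le X ω
    · refine Filter.Eventually.of_forall fun ω => ?_
      rcases lt_or_ge (0:ℝ) (X ω) with h1 | h1
      · rcases lt_or_ge (X ω) x with h2 | h2
        · -- eventually `X ω ∈ Ioc 0 y` and target is `X ω`
          have hmem : Set.Ico (X ω) x ∈ nhdsWithin x (Set.Iio x) :=
            Ico_mem_nhdsLT_of_mem ⟨h2, le_rfl⟩
          refine Tendsto.congr' ?_ tendsto_const_nhds
          filter_upwards [hmem] with y hy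
          rw [ind_mem X (⟨h1, h2⟩ : X ω ∈ Set.Ioo 0 x), ind_mem X (⟨h1, hy.1⟩ : X ω ∈ Set.Ioc 0 y)]
        · -- `X ω ≥ x`: always outside, target 0
          refine Tendsto.congr' ?_ tendsto_const_nhds
          filter_upwards [self_mem_nhdsWithin] with y (hy : y < x)
          rw [ind_not_mem X (fun (hc : X ω ∈ Set.Ioo 0 x) => absurd hc.2 (not_lt.mpr h2)),
            ind_not_mem X (fun (hc : X ω ∈ Set.Ioc 0 y) =>
              absurd (hc.2.trans_lt hy) (not_lt.mpr h2))]
      · refine Tendsto.congr' ?_ tendsto_const_nhds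
        refine Filter.Eventually.of_forall fun y => ?_
        show (X ⁻¹' Set.Ioo 0 x).indicator X ω = (X ⁻¹' Set.Ioc 0 y).indicator X ω
        rw [ind_not_mem X (fun (hc : X ω ∈ Set.Ioo 0 x) => absurd hc.1 (not_lt.mpr h1)),
          ind_not_mem X (fun (hc : X ω ∈ Set.Ioc 0 y) =>
            absurd hc.1 (not_lt.mpr h1))]
  refine Tendsto.congr' ?_ key
  filter_upwards [Ioo_mem_nhdsLT_of_mem (⟨hx, le_rfl⟩ : x ∈ Set.Ioc 0 x)] with y hy
  exact (G_pos_eq (le_of_lt hy.1)).symm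

end Aux2
section Aux3

variable {P : Measure Ω} [IsProbabilityMeasure P] {X : Ω → ℝ}
variable (hXm : Measurable X) (hXint : Integrable X P)

include hXm hXint

/-- Right limit of `G` at `x < 0`. -/
lemma rightLim_G_eq {x : ℝ} (hx : x < 0) :
    rightLim (G P X) x = J P X (fun ω => -X ω) (Set.Ioo x 0) := by
  refine rightLim_eq_of_tendsto ?_
  have key : Tendsto (fun y => J P X (fun ω => -X ω) (Set.Ico y 0)) (nhdsWithin x (Set.Ioi x))
      (nhds (J P X (fun ω => -X ω) (Set.Ioo x 0))) := by
    refine tendsto_integral_filter_of_dominated_convergence (fun ω => |X ω|)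
      (Filter.Eventually.of_forall fun y =>
        ((J_integrable hXm hXint hXint.neg measurableSet_Ico).aestronglyMeasurable)) ?_
      hXint.abs ?_
    · refine Filter.Eventually.of_forall fun y => Filter.Eventually.of_forall fun ω => ?_
      calc |(X ⁻¹' Set.Ico y 0).indicator (fun ω => -X ω) ω| ≤ |-X ω| := ind_abs_le _ ω
        _ = |X ω| := abs_neg _
    · refine Filter.Eventually.of_forall fun ω => ?_
      rcases lt_or_ge (X ω) (0:ℝ) with h1 | h1
      · rcases lt_or_ge x (X ω) with h2 | h2
        · have hmem : Set.Ioc x (X ω) ∈ nhdsWithin x (Set.Ioi x) :=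
            Ioc_mem_nhdsGT_of_mem ⟨le_rfl, h2⟩
          refine Tendsto.congr' ?_ tendsto_const_nhds
          filter_upwards [hmem] with y hy
          rw [ind_mem _ (⟨h2, h1⟩ : X ω ∈ Set.Ioo x 0),
            ind_mem _ (⟨hy.2, h1⟩ : X ω ∈ Set.Ico y 0)]
        · refine Tendsto.congr' ?_ tendsto_const_nhds
          filter_upwards [self_mem_nhdsWithin] with y (hy : x < y)
          rw [ind_not_mem _ (fun (hc : X ω ∈ Set.Ioo x 0) => absurd hc.1 (not_lt.mpr h2)),
            ind_not_mem _ (fun (hc : X ω ∈ Set.Ico y 0) =>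
              absurd (hy.trans_le hc.1) (not_lt.mpr h2))]
      · refine Tendsto.congr' ?_ tendsto_const_nhds
        refine Filter.Eventually.of_forall fun y => ?_
        show (X ⁻¹' Set.Ioo x 0).indicator (fun ω => -X ω) ω
          = (X ⁻¹' Set.Ico y 0).indicator (fun ω => -X ω) ω
        rw [ind_not_mem _ (fun (hc : X ω ∈ Set.Ioo x 0) => absurd hc.2 (not_lt.mpr h1)),
          ind_not_mem _ (fun (hc : X ω ∈ Set.Ico y 0) => absurd hc.2 (not_lt.mpr h1))]
  refine Tendsto.congr' ?_ key
  filter_upwards [Ioo_mem_nhdsGT_of_mem (⟨le_rfl, hx⟩ : x ∈ Set.Ico x 0)] with y hy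
  exact (G_neg_eq hy.2).symm

lemma J_singleton_pos (x : ℝ) : J P X X {x} = (P (X ⁻¹' {x})).toReal * x := by
  have : (fun ω => (X ⁻¹' {x}).indicator X ω) = fun ω => (X ⁻¹' {x}).indicator (fun _ => x) ω := by
    funext ω
    by_cases h : X ω ∈ ({x} : Set ℝ)
    · rw [ind_mem X h, ind_mem _ h]; exact h
    · rw [ind_not_mem X h, ind_not_mem _ h]
  rw [J, this, integral_indicator_const x (hXm (measurableSet_singleton x)), smul_eq_mul, measureReal_def]

lemma J_singleton_neg (x : ℝ) :
    J P X (fun ω => -X ω) {x} = (P (X ⁻¹' {x})).toReal * (-x) := by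
  have : (fun ω => (X ⁻¹' {x}).indicator (fun ω => -X ω) ω)
      = fun ω => (X ⁻¹' {x}).indicator (fun _ => -x) ω := by
    funext ω
    by_cases h : X ω ∈ ({x} : Set ℝ)
    · rw [ind_mem _ h, ind_mem _ h]; rw [show X ω = x from h]
    · rw [ind_not_mem _ h, ind_not_mem _ h]
  rw [J, this, integral_indicator_const (-x) (hXm (measurableSet_singleton x)), smul_eq_mul, measureReal_def]

/-- Jump formula at `x > 0`. -/
lemma G_jump_pos {x : ℝ} (hx : 0 < x) :
    G P X x = leftLim (G P X) x + (P (X ⁻¹' {x})).toReal * x := by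
  rw [leftLim_G_eq hXm hXint hx, G_pos_eq hx.le, ← J_singleton_pos hXm hXint x,
    ← J_union hXm hXint hXint measurableSet_Ioo (measurableSet_singleton x)
      (Set.disjoint_singleton_right.mpr (fun hc => absurd hc.2 (lt_irrefl x))),
    Set.Ioo_union_right hx]

/-- Jump formula at `x < 0`. -/
lemma G_jump_neg {x : ℝ} (hx : x < 0) :
    G P X x = rightLim (G P X) x + (P (X ⁻¹' {x})).toReal * (-x) := by
  rw [rightLim_G_eq hXm hXint hx, G_neg_eq hx, ← J_singleton_neg hXm hXint x,
    add_comm, ← J_union (f := fun ω => -X ω) hXm hXint hXint.neg (measurableSet_singleton x) measurableSet_Ioo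
      (Set.disjoint_singleton_left.mpr (fun hc => absurd hc.1 (lt_irrefl x)))]
  congr 1
  rw [Set.union_comm, Set.Ioo_union_left hx]

variable (hXmean : ∫ ω, X ω ∂P = 0)
include hXmean

lemma exists_G_ge_atBot {h : ℝ} (hh : h < mHalf P X) : ∃ y : ℝ, y < 0 ∧ h ≤ G P X y := by
  have key : Tendsto (fun y => J P X (fun ω => -X ω) (Set.Ico y 0)) atBot
      (nhds (mHalf P X)) := by
    rw [m_eq_Jneg hXm hXint hXmean]
    refine tendsto_integral_filter_of_dominated_convergence (fun ω => |X ω|)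
      (Filter.Eventually.of_forall fun y =>
        ((J_integrable hXm hXint hXint.neg measurableSet_Ico).aestronglyMeasurable)) ?_
      hXint.abs ?_
    · refine Filter.Eventually.of_forall fun y => Filter.Eventually.of_forall fun ω => ?_
      calc |(X ⁻¹' Set.Ico y 0).indicator (fun ω => -X ω) ω| ≤ |-X ω| := ind_abs_le _ ω
        _ = |X ω| := abs_neg _
    · refine Filter.Eventually.of_forall fun ω => ?_
      rcases lt_or_ge (X ω) (0:ℝ) with h1 | h1
      · refine Tendsto.congr' ?_ tendsto_const_nhds
        filter_upwards [eventually_le_atBot (X ω)] with y hy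
        rw [ind_mem _ (show X ω ∈ Set.Iio 0 from h1), ind_mem _ (⟨hy, h1⟩ : X ω ∈ Set.Ico y 0)]
      · refine Tendsto.congr' ?_ tendsto_const_nhds
        refine Filter.Eventually.of_forall fun y => ?_
        show (X ⁻¹' Set.Iio 0).indicator (fun ω => -X ω) ω
          = (X ⁻¹' Set.Ico y 0).indicator (fun ω => -X ω) ω
        rw [ind_not_mem _ (fun (hc : X ω ∈ Set.Iio 0) => absurd hc (not_lt.mpr h1)),
          ind_not_mem _ (fun (hc : X ω ∈ Set.Ico y 0) => absurd hc.2 (not_lt.mpr h1))]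
  have hev : ∀ᶠ y in (atBot : Filter ℝ), h < J P X (fun ω => -X ω) (Set.Ico y 0) :=
    key.eventually (eventually_gt_nhds hh)
  obtain ⟨y, hy1, hy2⟩ := (hev.and (eventually_lt_atBot (0:ℝ))).exists
  exact ⟨y, hy2, by rw [G_neg_eq hy2]; exact hy1.le⟩

lemma exists_G_ge_atTop {h : ℝ} (hh : h < mHalf P X) : ∃ y : ℝ, 0 < y ∧ h ≤ G P X y := by
  have key : Tendsto (fun y => J P X X (Set.Ioc 0 y)) atTop (nhds (mHalf P X)) := by
    rw [m_eq_J hXm hXint hXmean]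
    refine tendsto_integral_filter_of_dominated_convergence (fun ω => |X ω|)
      (Filter.Eventually.of_forall fun y =>
        ((J_integrable hXm hXint hXint measurableSet_Ioc).aestronglyMeasurable)) ?_
      hXint.abs ?_
    · exact Filter.Eventually.of_forall fun y => Filter.Eventually.of_forall fun ω =>
        ind_abs_le X ω
    · refine Filter.Eventually.of_forall fun ω => ?_
      rcases lt_or_ge (0:ℝ) (X ω) with h1 | h1
      · refine Tendsto.congr' ?_ tendsto_const_nhds
        filter_upwards [eventually_ge_atTop (X ω)] with y hy
        rw [ind_mem _ (show X ω ∈ Set.Ioi 0 from h1), ind_mem _ (⟨h1, hy⟩ : X ω ∈ Set.Ioc 0 y)]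
      · refine Tendsto.congr' ?_ tendsto_const_nhds
        refine Filter.Eventually.of_forall fun y => ?_
        show (X ⁻¹' Set.Ioi 0).indicator X ω = (X ⁻¹' Set.Ioc 0 y).indicator X ω
        rw [ind_not_mem _ (fun (hc : X ω ∈ Set.Ioi 0) => absurd hc (not_lt.mpr h1)),
          ind_not_mem _ (fun (hc : X ω ∈ Set.Ioc 0 y) => absurd hc.1 (not_lt.mpr h1))]
  have hev : ∀ᶠ y in (atTop : Filter ℝ), h < J P X X (Set.Ioc 0 y) :=
    key.eventually (eventually_gt_nhds hh)
  obtain ⟨y, hy1, hy2⟩ := (hev.and (eventually_gt_atTop (0:ℝ))).exists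
  exact ⟨y, hy2, by rw [G_pos_eq hy2.le]; exact hy1.le⟩

end Aux3
section Aux4

variable {P : Measure Ω} [IsProbabilityMeasure P] {X : Ω → ℝ}

lemma ereal_toReal_nonneg {a : EReal} (h : 0 ≤ a) (hat : a ≠ ⊤) : 0 ≤ a.toReal := by
  have := EReal.toReal_le_toReal h (by simp) hat
  simpa using this

lemma ereal_toReal_nonpos {a : EReal} (h : a ≤ 0) (hab : a ≠ ⊥) : a.toReal ≤ 0 := by
  have := EReal.toReal_le_toReal h hab (by simp)
  simpa using this

lemma Gbar_coe (x : ℝ) : Gbar P X (x : EReal) = G P X x := by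
  rw [Gbar, if_neg (by simp), EReal.toReal_coe]

lemma Gbar_top : Gbar P X ⊤ = mHalf P X := by rw [Gbar, if_pos (Or.inl rfl)]

lemma Gbar_bot : Gbar P X ⊥ = mHalf P X := by rw [Gbar, if_pos (Or.inr rfl)]

variable (hXm : Measurable X) (hXint : Integrable X P)
  (hXmean : ∫ ω, X ω ∂P = 0)

include hXm hXint hXmean

lemma Gbar_le_m (x : EReal) : Gbar P X x ≤ mHalf P X := by
  rcases eq_or_ne x ⊤ with rfl | ht
  · rw [Gbar_top]
  rcases eq_or_ne x ⊥ with rfl | hb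
  · rw [Gbar_bot]
  rw [← EReal.coe_toReal ht hb, Gbar_coe]
  exact G_le_m hXm hXint hXmean _

/-- the defining set for `xPlus` is upward closed -/
lemma splus_up {h : ℝ} {a b : EReal} (ha : 0 ≤ a ∧ h ≤ Gbar P X a) (hab : a ≤ b) :
    0 ≤ b ∧ h ≤ Gbar P X b := by
  obtain ⟨ha0, haG⟩ := ha
  refine ⟨ha0.trans hab, ?_⟩
  rcases eq_or_ne b ⊤ with rfl | hbt
  · rw [Gbar_top]; exact haG.trans (Gbar_le_m hXm hXint hXmean a)
  rcases eq_or_ne b ⊥ with rfl | hbb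
  · rw [le_bot_iff.mp hab] at ha0; exact absurd ha0 (by simp)
  have hat : a ≠ ⊤ := fun hc => hbt (top_le_iff.mp (hc ▸ hab))
  have hanb : a ≠ ⊥ := fun hc => by rw [hc] at ha0; exact absurd ha0 (by simp)
  have h2 : h ≤ G P X a.toReal := by
    rw [← Gbar_coe, EReal.coe_toReal hat hanb]; exact haG
  rw [← EReal.coe_toReal hbt hbb, Gbar_coe]
  refine h2.trans (G_mono_pos hXm hXint (ereal_toReal_nonneg ha0 hat) ?_)
  exact EReal.toReal_le_toReal hab hanb hbt

/-- the defining set for `xMinus` is downward closed -/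
lemma sminus_down {h : ℝ} {a b : EReal} (ha : a ≤ 0 ∧ h ≤ Gbar P X a) (hab : b ≤ a) :
    b ≤ 0 ∧ h ≤ Gbar P X b := by
  obtain ⟨ha0, haG⟩ := ha
  refine ⟨hab.trans ha0, ?_⟩
  rcases eq_or_ne b ⊥ with rfl | hbb
  · rw [Gbar_bot]; exact haG.trans (Gbar_le_m hXm hXint hXmean a)
  rcases eq_or_ne b ⊤ with rfl | hbt
  · rw [top_le_iff.mp hab] at ha0; exact absurd ha0 (by simp)
  have hanb : a ≠ ⊥ := fun hc => hbb (le_bot_iff.mp (hc ▸ hab))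
  have hat : a ≠ ⊤ := fun hc => by rw [hc] at ha0; exact absurd ha0 (by simp)
  have h2 : h ≤ G P X a.toReal := by
    rw [← Gbar_coe, EReal.coe_toReal hat hanb]; exact haG
  rw [← EReal.coe_toReal hbt hbb, Gbar_coe]
  refine h2.trans (G_anti_neg hXm hXint (EReal.toReal_le_toReal hab hbb hat) ?_)
  exact ereal_toReal_nonpos ha0 hanb

omit hXm hXint hXmean

lemma xplus_le {h : ℝ} {z : EReal} (hz : 0 ≤ z) (hG : h ≤ Gbar P X z) :
    xPlus P X h ≤ z := sInf_le ⟨hz, hG⟩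

lemma xplus_nonneg (h : ℝ) : 0 ≤ xPlus P X h := le_sInf fun z hz => hz.1

lemma xplus_mono {h h' : ℝ} (hh : h ≤ h') : xPlus P X h ≤ xPlus P X h' :=
  sInf_le_sInf fun z hz => ⟨hz.1, hh.trans hz.2⟩

lemma le_xplus {h : ℝ} {x : ℝ} (hx : 0 ≤ x)
    (hstrict : ∀ y : ℝ, 0 ≤ y → y < x → G P X y < h) :
    (x : EReal) ≤ xPlus P X h := by
  refine le_sInf fun z hz => ?_
  obtain ⟨hz1, hz2⟩ := hz
  by_contra hc
  push_neg at hc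
  have hzt : z ≠ ⊤ := fun h' => absurd (h' ▸ hc) (by simp)
  have hzb : z ≠ ⊥ := fun h' => absurd (h' ▸ hz1) (by simp)
  have hzG : h ≤ G P X z.toReal := by
    rw [← Gbar_coe, EReal.coe_toReal hzt hzb]; exact hz2
  have h1 : 0 ≤ z.toReal := ereal_toReal_nonneg hz1 hzt
  have h2 : z.toReal < x := by
    rw [← EReal.coe_lt_coe_iff, EReal.coe_toReal hzt hzb]; exact hc
  exact absurd hzG (not_le.mpr (hstrict z.toReal h1 h2))

lemma xminus_ge {h : ℝ} {z : EReal} (hz : z ≤ 0) (hG : h ≤ Gbar P X z) :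
    z ≤ xMinus P X h := le_sSup ⟨hz, hG⟩

lemma xminus_nonpos (h : ℝ) : xMinus P X h ≤ 0 := sSup_le fun z hz => hz.1

lemma xminus_anti {h h' : ℝ} (hh : h ≤ h') : xMinus P X h' ≤ xMinus P X h :=
  sSup_le_sSup fun z hz => ⟨hz.1, hh.trans hz.2⟩

lemma xminus_le {h : ℝ} {x : ℝ} (hx : x ≤ 0)
    (hstrict : ∀ y : ℝ, y ≤ 0 → x < y → G P X y < h) :
    xMinus P X h ≤ (x : EReal) := by
  refine sSup_le fun z hz => ?_
  obtain ⟨hz1, hz2⟩ := hz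
  by_contra hc
  push_neg at hc
  have hzb : z ≠ ⊥ := fun h' => absurd (h' ▸ hc) (by simp)
  have hzt : z ≠ ⊤ := fun h' => absurd (h' ▸ hz1) (by simp)
  have hzG : h ≤ G P X z.toReal := by
    rw [← Gbar_coe, EReal.coe_toReal hzt hzb]; exact hz2
  have h1 : z.toReal ≤ 0 := ereal_toReal_nonpos hz1 hzb
  have h2 : x < z.toReal := by
    rw [← EReal.coe_lt_coe_iff, EReal.coe_toReal hzt hzb]; exact hc
  exact absurd hzG (not_le.mpr (hstrict z.toReal h1 h2))

lemma wFun_mono {h h' : ℝ} (hh : h ≤ h') : wFun P X h ≤ wFun P X h' :=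
  EReal.sub_le_sub (xplus_mono hh) (xminus_anti hh)

end Aux4
section Aux5

variable {P : Measure Ω} [IsProbabilityMeasure P] {X : Ω → ℝ}
variable (hXm : Measurable X) (hXint : Integrable X P)
  (hXmean : ∫ ω, X ω ∂P = 0)

include hXm hXint

/-- Strict increase of `G` below `x` relative to `hPlus`, plus bounds. -/
lemma hplus_facts (hXmean : ∫ ω, X ω ∂P = 0) {x u : ℝ} (hxu : (x, u) ∈ Gplus P X) :
    0 < hPlus P X x u ∧ hPlus P X x u < mHalf P X ∧ hPlus P X x u ≤ G P X x ∧
      (∀ y : ℝ, 0 ≤ y → y < x → G P X y < hPlus P X x u) := by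
  simp only [Gplus, Set.mem_setOf_eq] at hxu
  obtain ⟨hM, hu0, hu1, hN, hL, hT⟩ := hxu
  obtain ⟨hx, hMall⟩ := hM
  set lam := leftLim (G P X) x with hlam
  have hlamJ : lam = J P X X (Set.Ioo 0 x) := leftLim_G_eq hXm hXint hx
  have hjump : G P X x = lam + (P (X ⁻¹' {x})).toReal * x := G_jump_pos hXm hXint hx
  have hjnn : 0 ≤ (P (X ⁻¹' {x})).toReal * x :=
    mul_nonneg ENNReal.toReal_nonneg hx.le
  have hlam_le : lam ≤ G P X x := by rw [hjump]; linarith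
  have hGy_le : ∀ y : ℝ, 0 ≤ y → y < x → G P X y ≤ lam := by
    intro y hy hyx
    rw [G_pos_eq hy, hlamJ]
    exact J_mono hXm hXint hXint measurableSet_Ioc measurableSet_Ioo
      (fun z hz => ⟨hz.1, lt_of_le_of_lt hz.2 hyx⟩) (fun ω hω => hω.1.le)
  have hsplit : ∀ y : ℝ, 0 ≤ y → y < x → P {ω | X ω ∈ Set.Ioo y x} ≠ 0 →
      G P X y < lam := by
    intro y hy hyx hP
    have hun : Set.Ioc 0 y ∪ Set.Ioo y x = Set.Ioo 0 x := Set.Ioc_union_Ioo_eq_Ioo hy hyx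
    have := J_union (s := Set.Ioc 0 y) (t := Set.Ioo y x) hXm hXint hXint measurableSet_Ioc
      measurableSet_Ioo
      (Set.disjoint_left.mpr fun z hz1 hz2 => absurd hz2.1 (not_lt.mpr hz1.2)) (P := P)
    rw [hun] at this
    have hpos : 0 < J P X X (Set.Ioo y x) :=
      J_pos hXm hXint hXint measurableSet_Ioo
        (fun ω hω => lt_of_le_of_lt hy hω.1) hP
    rw [G_pos_eq hy, hlamJ, this]
    linarith
  have hstrict : ∀ y : ℝ, 0 ≤ y → y < x → G P X y < hPlus P X x u := by
    rw [hPlus, ← hlam]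
    by_cases hatom : P {ω | X ω = x} = 0
    · have hu1' : u = 1 := hN ⟨hx, hatom⟩
      have hLx : x ∉ Lplus P X := by
        rintro ⟨-, y, hy0, hyx, hPy⟩
        have : P {ω | X ω ∈ Set.Ioc y x} ≤ P {ω | X ω ∈ Set.Ioo y x} + P {ω | X ω = x} := by
          refine le_trans (measure_mono ?_) (measure_union_le _ _)
          intro ω hω
          rcases lt_or_eq_of_le hω.2 with h' | h'
          · exact Or.inl ⟨hω.1, h'⟩
          · exact Or.inr h'
        rw [hPy, hatom] at this
        exact (hMall y hyx).ne' (le_antisymm (by simpa using this) zero_le)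
      intro y hy hyx
      have := hsplit y hy hyx (fun hc => hLx ⟨hx, y, hy, hyx, hc⟩)
      have hGx : G P X x = lam := by
        rw [hjump]
        simp [show P (X ⁻¹' {x}) = 0 from hatom]
      rw [hGx]
      linarith
    · have hjpos : 0 < (P (X ⁻¹' {x})).toReal * x := by
        refine mul_pos (ENNReal.toReal_pos hatom (measure_ne_top P _)) hx
      rcases lt_or_eq_of_le hu0 with hu | hu
      · intro y hy hyx
        have h1 := hGy_le y hy hyx
        have h2 : lam < lam + u * (G P X x - lam) := by
          have : 0 < G P X x - lam := by rw [hjump]; linarith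
          nlinarith
        linarith
      · have hLx : x ∉ Lplus P X := fun hc => absurd (hL hc) (by rw [← hu]; simp)
        intro y hy hyx
        have := hsplit y hy hyx (fun hc => hLx ⟨hx, y, hy, hyx, hc⟩)
        rw [← hu]
        linarith
  have hle : hPlus P X x u ≤ G P X x := by
    rw [hPlus, ← hlam]
    have : 0 ≤ G P X x - lam := by linarith
    nlinarith
  have hpos : 0 < hPlus P X x u := by
    have := hstrict 0 le_rfl hx
    rwa [G_zero hXm hXint] at this
  refine ⟨hpos, ?_, hle, hstrict⟩
  -- h < m
  by_cases htail : P {ω | x < X ω} = 0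
  · obtain ⟨hNx, hu1'⟩ := hT htail
    have hatom : P {ω | X ω = x} ≠ 0 := fun hc => hNx ⟨hx, hc⟩
    have hjpos : 0 < (P (X ⁻¹' {x})).toReal * x :=
      mul_pos (ENNReal.toReal_pos hatom (measure_ne_top P _)) hx
    have hlt : hPlus P X x u < G P X x := by
      rw [hPlus, ← hlam, hjump]
      nlinarith
    exact lt_of_lt_of_le hlt (G_le_m hXm hXint hXmean x)
  · have hun : Set.Ioc 0 x ∪ Set.Ioi x = Set.Ioi 0 := Set.Ioc_union_Ioi_eq_Ioi hx.le
    have hJu := J_union (s := Set.Ioc 0 x) (t := Set.Ioi x) hXm hXint hXint measurableSet_Ioc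
      measurableSet_Ioi (Set.Ioc_disjoint_Ioi le_rfl) (P := P)
    rw [hun] at hJu
    have hpos2 : 0 < J P X X (Set.Ioi x) :=
      J_pos hXm hXint hXint measurableSet_Ioi (fun ω hω => hx.trans hω) htail
    have : G P X x < mHalf P X := by
      rw [G_pos_eq hx.le, m_eq_J hXm hXint hXmean, hJu]
      linarith
    linarith

/-- `xPlus` recovers `x` from `hPlus x u`. -/
lemma xplus_hplus (hXmean : ∫ ω, X ω ∂P = 0) {x u : ℝ} (hxu : (x, u) ∈ Gplus P X) :
    xPlus P X (hPlus P X x u) = (x : EReal) := by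
  obtain ⟨-, -, hle, hstrict⟩ := hplus_facts hXm hXint hXmean hxu
  have hx : 0 < x := hxu.1.1
  refine le_antisymm (xplus_le (by exact_mod_cast hx.le) ?_) (le_xplus hx.le hstrict)
  rw [Gbar_coe]; exact hle

/-- `xMinus h` is a finite nonpositive real for `0 < h < m`. -/
lemma xminus_finite (hXmean : ∫ ω, X ω ∂P = 0) {h : ℝ} (hh : h < mHalf P X) :
    xMinus P X h ≠ ⊥ ∧ xMinus P X h ≠ ⊤ := by
  obtain ⟨y, hy0, hyG⟩ := exists_G_ge_atBot hXm hXint hXmean hh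
  have h1 : (y : EReal) ≤ xMinus P X h := by
    refine xminus_ge (by exact_mod_cast hy0.le) ?_
    rw [Gbar_coe]; exact hyG
  constructor
  · intro hc
    rw [hc, le_bot_iff] at h1
    exact (EReal.coe_ne_bot y) h1
  · intro hc
    have := xminus_nonpos (P := P) (X := X) h
    rw [hc] at this
    exact absurd this (by simp)

lemma xplus_finite (hXmean : ∫ ω, X ω ∂P = 0) {h : ℝ} (hh : h < mHalf P X) :
    xPlus P X h ≠ ⊥ ∧ xPlus P X h ≠ ⊤ := by
  obtain ⟨y, hy0, hyG⟩ := exists_G_ge_atTop hXm hXint hXmean hh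
  have h1 : xPlus P X h ≤ (y : EReal) := by
    refine xplus_le (by exact_mod_cast hy0.le) ?_
    rw [Gbar_coe]; exact hyG
  constructor
  · intro hc
    have := xplus_nonneg (P := P) (X := X) h
    rw [hc] at this
    exact absurd this (by simp)
  · intro hc
    rw [hc, top_le_iff] at h1
    exact (EReal.coe_ne_top y) h1

end Aux5
section Aux6

variable {P : Measure Ω} [IsProbabilityMeasure P] {X : Ω → ℝ}
variable (hXm : Measurable X) (hXint : Integrable X P)

include hXm hXint

/-- Strict facts for the negative side. -/
lemma hminus_facts (hXmean : ∫ ω, X ω ∂P = 0) {x u : ℝ} (hxu : (x, u) ∈ Gminus P X) :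
    0 < hMinus P X x u ∧ hMinus P X x u < mHalf P X ∧ hMinus P X x u ≤ G P X x ∧
      (∀ y : ℝ, y ≤ 0 → x < y → G P X y < hMinus P X x u) := by
  simp only [Gminus, Set.mem_setOf_eq] at hxu
  obtain ⟨hM, hu0, hu1, hN, hL, hT⟩ := hxu
  obtain ⟨hx, hMall⟩ := hM
  have hXint' : Integrable (fun ω => -X ω) P := hXint.neg
  set rho := rightLim (G P X) x with hrho
  have hrhoJ : rho = J P X (fun ω => -X ω) (Set.Ioo x 0) := rightLim_G_eq hXm hXint hx
  have hjump : G P X x = rho + (P (X ⁻¹' {x})).toReal * (-x) := G_jump_neg hXm hXint hx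
  have hjnn : 0 ≤ (P (X ⁻¹' {x})).toReal * (-x) :=
    mul_nonneg ENNReal.toReal_nonneg (by linarith)
  have hrho_le : rho ≤ G P X x := by rw [hjump]; linarith
  have hrho_nn : 0 ≤ rho := by
    rw [hrhoJ]
    exact J_nonneg hXm hXint fun ω hω => by linarith [hω.2]
  have hGy_le : ∀ y : ℝ, y < 0 → x < y → G P X y ≤ rho := by
    intro y hy hxy
    rw [G_neg_eq hy, hrhoJ]
    exact J_mono hXm hXint hXint' measurableSet_Ico measurableSet_Ioo
      (fun z hz => ⟨lt_of_lt_of_le hxy hz.1, hz.2⟩) (fun ω hω => by linarith [hω.2])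
  have hsplit : ∀ y : ℝ, y < 0 → x < y → P {ω | X ω ∈ Set.Ioo x y} ≠ 0 →
      G P X y < rho := by
    intro y hy hxy hP
    have hun : Set.Ioo x y ∪ Set.Ico y 0 = Set.Ioo x 0 := Set.Ioo_union_Ico_eq_Ioo hxy hy.le
    have := J_union (s := Set.Ioo x y) (t := Set.Ico y 0) hXm hXint hXint'
      measurableSet_Ioo measurableSet_Ico
      (Set.disjoint_left.mpr fun z hz1 hz2 => absurd hz2.1 (not_le.mpr hz1.2)) (P := P)
    rw [hun] at this
    have hpos : 0 < J P X (fun ω => -X ω) (Set.Ioo x y) :=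
      J_pos hXm hXint hXint' measurableSet_Ioo
        (fun ω hω => by have := hω.2; have := hy; simp only [neg_pos]; linarith) hP
    rw [G_neg_eq hy, hrhoJ, this]
    linarith
  -- the atom at x, if Lminus at y=0
  have hpos0 : 0 < hMinus P X x u := by
    rw [hMinus, ← hrho]
    by_cases hP0 : P {ω | X ω ∈ Set.Ioo x 0} = 0
    · -- x ∈ Lminus, so u > 0; and there is an atom at x
      have hLx : x ∈ Lminus P X := ⟨hx, 0, hx, le_rfl, hP0⟩
      have hu : 0 < u := hL hLx
      have hatom : P {ω | X ω = x} ≠ 0 := by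
        intro hc
        have hsub : P {ω | X ω ∈ Set.Ico x 0} ≤ P {ω | X ω = x} + P {ω | X ω ∈ Set.Ioo x 0} := by
          refine le_trans (measure_mono ?_) (measure_union_le _ _)
          intro ω hω
          rcases eq_or_lt_of_le hω.1 with h' | h'
          · exact Or.inl h'.symm
          · exact Or.inr ⟨h', hω.2⟩
        rw [hc, hP0] at hsub
        exact (hMall 0 hx).ne' (le_antisymm (by simpa using hsub) zero_le)
      have hjpos : 0 < (P (X ⁻¹' {x})).toReal * (-x) :=
        mul_pos (ENNReal.toReal_pos hatom (measure_ne_top P _)) (by linarith)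
      have : 0 < G P X x - rho := by rw [hjump]; linarith
      nlinarith
    · have : 0 < rho := by
        rw [hrhoJ]
        exact J_pos hXm hXint hXint' measurableSet_Ioo
          (fun ω hω => by simp only [neg_pos]; exact hω.2) hP0
      have : 0 ≤ u * (G P X x - rho) := mul_nonneg hu0 (by linarith)
      linarith
  have hstrict : ∀ y : ℝ, y ≤ 0 → x < y → G P X y < hMinus P X x u := by
    intro y hy hxy
    rcases eq_or_lt_of_le hy with rfl | hy'
    · rw [G_zero hXm hXint]; exact hpos0
    rw [hMinus, ← hrho]
    by_cases hatom : P {ω | X ω = x} = 0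
    · have hu1' : u = 1 := hN ⟨hx, hatom⟩
      have hLx : x ∉ Lminus P X := by
        rintro ⟨-, y', hxy', hy0', hPy'⟩
        have hsub : P {ω | X ω ∈ Set.Ico x y'} ≤ P {ω | X ω = x} + P {ω | X ω ∈ Set.Ioo x y'} := by
          refine le_trans (measure_mono ?_) (measure_union_le _ _)
          intro ω hω
          rcases eq_or_lt_of_le hω.1 with h' | h'
          · exact Or.inl h'.symm
          · exact Or.inr ⟨h', hω.2⟩
        rw [hatom, hPy'] at hsub
        exact (hMall y' hxy').ne' (le_antisymm (by simpa using hsub) zero_le)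
      have := hsplit y hy' hxy (fun hc => hLx ⟨hx, y, hxy, hy, hc⟩)
      have hGx : G P X x = rho := by
        rw [hjump]
        simp [show P (X ⁻¹' {x}) = 0 from hatom]
      rw [hGx]
      linarith
    · have hjpos : 0 < (P (X ⁻¹' {x})).toReal * (-x) :=
        mul_pos (ENNReal.toReal_pos hatom (measure_ne_top P _)) (by linarith)
      rcases lt_or_eq_of_le hu0 with hu | hu
      · have h1 := hGy_le y hy' hxy
        have h2 : rho < rho + u * (G P X x - rho) := by
          have : 0 < G P X x - rho := by rw [hjump]; linarith
          nlinarith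
        linarith
      · have hLx : x ∉ Lminus P X := fun hc => absurd (hL hc) (by rw [← hu]; simp)
        have := hsplit y hy' hxy (fun hc => hLx ⟨hx, y, hxy, hy, hc⟩)
        rw [← hu]
        linarith
  have hle : hMinus P X x u ≤ G P X x := by
    rw [hMinus, ← hrho]
    have : 0 ≤ G P X x - rho := by linarith
    nlinarith
  refine ⟨hpos0, ?_, hle, hstrict⟩
  by_cases htail : P {ω | X ω < x} = 0
  · obtain ⟨hNx, hu1'⟩ := hT htail
    have hatom : P {ω | X ω = x} ≠ 0 := fun hc => hNx ⟨hx, hc⟩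
    have hjpos : 0 < (P (X ⁻¹' {x})).toReal * (-x) :=
      mul_pos (ENNReal.toReal_pos hatom (measure_ne_top P _)) (by linarith)
    have hlt : hMinus P X x u < G P X x := by
      rw [hMinus, ← hrho, hjump]
      nlinarith
    exact lt_of_lt_of_le hlt (G_le_m hXm hXint hXmean x)
  · have hun : Set.Iio x ∪ Set.Ico x 0 = Set.Iio 0 := Set.Iio_union_Ico_eq_Iio hx.le
    have hJu := J_union (s := Set.Iio x) (t := Set.Ico x 0) hXm hXint hXint'
      measurableSet_Iio measurableSet_Ico
      (Set.disjoint_left.mpr fun z hz1 hz2 => absurd hz2.1 (not_le.mpr hz1)) (P := P)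
    rw [hun] at hJu
    have hpos2 : 0 < J P X (fun ω => -X ω) (Set.Iio x) :=
      J_pos hXm hXint hXint' measurableSet_Iio
        (fun ω hω => by simp only [neg_pos]; exact hω.trans hx) htail
    have : G P X x < mHalf P X := by
      rw [G_neg_eq hx, m_eq_Jneg hXm hXint hXmean, hJu]
      linarith
    linarith

/-- `xMinus` recovers `x` from `hMinus x u`. -/
lemma xminus_hminus (hXmean : ∫ ω, X ω ∂P = 0) {x u : ℝ} (hxu : (x, u) ∈ Gminus P X) :
    xMinus P X (hMinus P X x u) = (x : EReal) := by
  obtain ⟨-, -, hle, hstrict⟩ := hminus_facts hXm hXint hXmean hxu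
  have hx : x < 0 := hxu.1.1
  refine le_antisymm (xminus_le hx.le hstrict) (xminus_ge (by exact_mod_cast hx.le) ?_)
  rw [Gbar_coe]; exact hle

end Aux6
section Aux7

variable {P : Measure Ω} [IsProbabilityMeasure P] {X : Ω → ℝ}

lemma forall_lt_le {h c0 : ℝ} (hp : 0 < h) (key : ∀ h', 0 < h' → h' < h → h' ≤ c0) :
    h ≤ c0 := by
  by_contra hc
  push_neg at hc
  have h1 : 0 < max (h/2) ((c0+h)/2) := lt_of_lt_of_le (by linarith) (le_max_left _ _)
  have h2 : max (h/2) ((c0+h)/2) < h := max_lt (by linarith) (by linarith)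
  have h3 : c0 < max (h/2) ((c0+h)/2) := lt_of_lt_of_le (by linarith) (le_max_right _ _)
  exact absurd (key _ h1 h2) (not_le.mpr h3)

variable (hXm : Measurable X) (hXint : Integrable X P)
  (hXmean : ∫ ω, X ω ∂P = 0)

include hXm hXint hXmean

/-- The combinatorial core, positive side. -/
lemma core_pos {h h0 x : ℝ} {v : EReal}
    (hh0 : h0 ∈ Set.Ioc 0 (mHalf P X)) (hv : wFun P X h0 = v)
    (hhpos : 0 < h) (hhm : h < mHalf P X)
    (hxp : xPlus P X h = (x : EReal))
    (hstrict : ∀ y : ℝ, 0 ≤ y → y < x → G P X y < h)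
    (d : EReal → EReal)
    (hcd : ∀ h' ∈ Set.Icc (0:ℝ) (mHalf P X), xPlus P X h' = d (wFun P X h')) :
    wFun P X h ≤ v ↔ ((x : EReal) < d v ∨ ((x : EReal) = d v ∧ h ≤ hOf P X v)) := by
  have hx0 : 0 ≤ x := by
    have := xplus_nonneg (P := P) (X := X) h
    rw [hxp] at this
    exact_mod_cast this
  set Sv := {h' : ℝ | h' ∈ Set.Ioc 0 (mHalf P X) ∧ wFun P X h' ≤ v} with hSv
  have hbdd : BddAbove Sv := ⟨mHalf P X, fun a ha => ha.1.2⟩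
  have hne : Sv.Nonempty := ⟨h0, hh0, hv.le⟩
  have hdv : d v = xPlus P X h0 := by
    rw [← hv, ← hcd h0 ⟨hh0.1.le, hh0.2⟩]
  constructor
  · intro hw
    have hhv : h ≤ hOf P X v := le_csSup hbdd ⟨⟨hhpos, hhm.le⟩, hw⟩
    rcases le_or_gt h h0 with hle | hlt
    · have hmono : xPlus P X h ≤ xPlus P X h0 := xplus_mono hle
      rw [hxp, ← hdv] at hmono
      rcases lt_or_eq_of_le hmono with h' | h'
      · exact Or.inl h'
      · exact Or.inr ⟨h', hhv⟩
    · have h1 : v ≤ wFun P X h := hv ▸ wFun_mono hlt.le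
      have h2 : wFun P X h = v := le_antisymm hw h1
      have h3 : xPlus P X h = d (wFun P X h) := hcd h ⟨hhpos.le, hhm.le⟩
      exact Or.inr ⟨by rw [← hxp, h3, h2], hhv⟩
  · rintro (hlt | ⟨heq, hhv⟩)
    · have hle : h ≤ h0 := by
        by_contra hc
        push_neg at hc
        have := xplus_mono (P := P) (X := X) hc.le
        rw [hxp, ← hdv] at this
        exact absurd (lt_of_le_of_lt this hlt) (lt_irrefl _)
      exact (wFun_mono hle).trans hv.le
    · rcases eq_or_ne v ⊤ with rfl | hvt
      · exact le_top
      have hv0 : (0 : EReal) ≤ v := by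
        rw [← hv, wFun]
        calc (0:EReal) = 0 - 0 := by simp
        _ ≤ xPlus P X h0 - xMinus P X h0 :=
          EReal.sub_le_sub (xplus_nonneg h0) (xminus_nonpos h0)
      have hvb : v ≠ ⊥ := fun hc => by rw [hc] at hv0; exact absurd hv0 (by simp)
      set vr := v.toReal with hvr
      have hvcoe : (vr : EReal) = v := EReal.coe_toReal hvt hvb
      obtain ⟨hxmb, hxmt⟩ := xminus_finite hXm hXint hXmean hhm
      set r := (xMinus P X h).toReal with hrdef
      have hxm : xMinus P X h = (r : EReal) := (EReal.coe_toReal hxmt hxmb).symm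
      have hr0 : r ≤ 0 := ereal_toReal_nonpos (xminus_nonpos h) hxmb
      have hW' : ∀ h', 0 < h' → h' < h → wFun P X h' ≤ v := by
        intro h' h'p h'h
        obtain ⟨h'', hmem, hgt⟩ := exists_lt_of_lt_csSup hne (lt_of_lt_of_le h'h hhv)
        exact (wFun_mono hgt.le).trans hmem.2
      have hA : ∀ ε : ℝ, 0 < ε → ∃ hA, 0 < hA ∧ hA < h ∧
          ((x - ε : ℝ) : EReal) ≤ xPlus P X hA := by
        intro ε hε
        rcases lt_or_ge (x - ε) 0 with hneg | hpos'
        · refine ⟨h/2, by linarith, by linarith, le_trans ?_ (xplus_nonneg _)⟩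
          exact_mod_cast hneg.le
        · by_contra hc
          push_neg at hc
          have hG : h ≤ G P X (x - ε) := by
            refine forall_lt_le hhpos fun h' h'p h'h => ?_
            obtain ⟨z, hz, hzlt⟩ := sInf_lt_iff.mp (hc h' h'p h'h)
            have hmem := splus_up hXm hXint hXmean hz hzlt.le
            rw [Gbar_coe] at hmem
            exact hmem.2
          exact absurd hG (not_le.mpr (hstrict (x - ε) hpos' (by linarith)))
      have hB : ∀ ε : ℝ, 0 < ε → ∃ hB, 0 < hB ∧ hB < h ∧
          xMinus P X hB ≤ ((r + ε : ℝ) : EReal) := by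
        intro ε hε
        rcases le_or_gt 0 (r + ε) with hpos' | hneg
        · refine ⟨h/2, by linarith, by linarith, le_trans (xminus_nonpos _) ?_⟩
          exact_mod_cast hpos'
        · by_contra hc
          push_neg at hc
          have hG : h ≤ G P X (r + ε) := by
            refine forall_lt_le hhpos fun h' h'p h'h => ?_
            obtain ⟨z, hz, hzlt⟩ := lt_sSup_iff.mp (hc h' h'p h'h)
            have hmem := sminus_down hXm hXint hXmean hz hzlt.le
            rw [Gbar_coe] at hmem
            exact hmem.2
          have hle : ((r + ε : ℝ) : EReal) ≤ xMinus P X h := by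
            refine xminus_ge ?_ ?_
            · exact_mod_cast hneg.le
            · rw [Gbar_coe]; exact hG
          rw [hxm] at hle
          have : r + ε ≤ r := by exact_mod_cast hle
          linarith
      have hfin : x - r ≤ vr := by
        refine le_of_forall_pos_le_add fun ε hε => ?_
        obtain ⟨ha, ha0, hah, haP⟩ := hA (ε/2) (by linarith)
        obtain ⟨hb, hb0, hbh, hbM⟩ := hB (ε/2) (by linarith)
        set hc := max ha hb with hhc
        have h1 : ((x - ε/2 : ℝ) : EReal) ≤ xPlus P X hc :=
          haP.trans (xplus_mono (le_max_left _ _))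
        have h2 : xMinus P X hc ≤ ((r + ε/2 : ℝ) : EReal) :=
          (xminus_anti (le_max_right _ _)).trans hbM
        have h3 : wFun P X hc ≤ v :=
          hW' hc (lt_of_lt_of_le ha0 (le_max_left _ _)) (max_lt hah hbh)
        have h4 : ((x - ε/2 - (r + ε/2) : ℝ) : EReal) ≤ wFun P X hc := by
          rw [EReal.coe_sub, wFun]
          exact EReal.sub_le_sub h1 h2
        have h5 : ((x - ε/2 - (r + ε/2) : ℝ) : EReal) ≤ (vr : EReal) := by
          rw [hvcoe]; exact h4.trans h3
        have h6 : x - ε/2 - (r + ε/2) ≤ vr := by exact_mod_cast h5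
        linarith
      have : wFun P X h = ((x - r : ℝ) : EReal) := by
        rw [wFun, hxp, hxm, EReal.coe_sub]
      rw [this, ← hvcoe]
      exact_mod_cast hfin

/-- The combinatorial core, negative side. -/
lemma core_neg {h h0 x : ℝ} {v : EReal}
    (hh0 : h0 ∈ Set.Ioc 0 (mHalf P X)) (hv : wFun P X h0 = v)
    (hhpos : 0 < h) (hhm : h < mHalf P X)
    (hxm : xMinus P X h = (x : EReal))
    (hstrict : ∀ y : ℝ, y ≤ 0 → x < y → G P X y < h)
    (c : EReal → EReal)
    (hcd : ∀ h' ∈ Set.Icc (0:ℝ) (mHalf P X), xMinus P X h' = c (wFun P X h')) :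
    wFun P X h ≤ v ↔ (c v < (x : EReal) ∨ ((x : EReal) = c v ∧ h ≤ hOf P X v)) := by
  have hx0 : x ≤ 0 := by
    have := xminus_nonpos (P := P) (X := X) h
    rw [hxm] at this
    exact_mod_cast this
  set Sv := {h' : ℝ | h' ∈ Set.Ioc 0 (mHalf P X) ∧ wFun P X h' ≤ v} with hSv
  have hbdd : BddAbove Sv := ⟨mHalf P X, fun a ha => ha.1.2⟩
  have hne : Sv.Nonempty := ⟨h0, hh0, hv.le⟩
  have hdv : c v = xMinus P X h0 := by
    rw [← hv, ← hcd h0 ⟨hh0.1.le, hh0.2⟩]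
  constructor
  · intro hw
    have hhv : h ≤ hOf P X v := le_csSup hbdd ⟨⟨hhpos, hhm.le⟩, hw⟩
    rcases le_or_gt h h0 with hle | hlt
    · have hmono : xMinus P X h0 ≤ xMinus P X h := xminus_anti hle
      rw [hxm, ← hdv] at hmono
      rcases lt_or_eq_of_le hmono with h' | h'
      · exact Or.inl h'
      · exact Or.inr ⟨h'.symm, hhv⟩
    · have h1 : v ≤ wFun P X h := hv ▸ wFun_mono hlt.le
      have h2 : wFun P X h = v := le_antisymm hw h1
      have h3 : xMinus P X h = c (wFun P X h) := hcd h ⟨hhpos.le, hhm.le⟩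
      exact Or.inr ⟨by rw [← hxm, h3, h2], hhv⟩
  · rintro (hlt | ⟨heq, hhv⟩)
    · have hle : h ≤ h0 := by
        by_contra hc
        push_neg at hc
        have := xminus_anti (P := P) (X := X) hc.le
        rw [hxm, ← hdv] at this
        exact absurd (lt_of_lt_of_le hlt this) (lt_irrefl _)
      exact (wFun_mono hle).trans hv.le
    · rcases eq_or_ne v ⊤ with rfl | hvt
      · exact le_top
      have hv0 : (0 : EReal) ≤ v := by
        rw [← hv, wFun]
        calc (0:EReal) = 0 - 0 := by simp
        _ ≤ xPlus P X h0 - xMinus P X h0 :=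
          EReal.sub_le_sub (xplus_nonneg h0) (xminus_nonpos h0)
      have hvb : v ≠ ⊥ := fun hc => by rw [hc] at hv0; exact absurd hv0 (by simp)
      set vr := v.toReal with hvr
      have hvcoe : (vr : EReal) = v := EReal.coe_toReal hvt hvb
      obtain ⟨hxpb, hxpt⟩ := xplus_finite hXm hXint hXmean hhm
      set p := (xPlus P X h).toReal with hpdef
      have hxp : xPlus P X h = (p : EReal) := (EReal.coe_toReal hxpt hxpb).symm
      have hp0 : 0 ≤ p := ereal_toReal_nonneg (xplus_nonneg h) hxpt
      have hW' : ∀ h', 0 < h' → h' < h → wFun P X h' ≤ v := by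
        intro h' h'p h'h
        obtain ⟨h'', hmem, hgt⟩ := exists_lt_of_lt_csSup hne (lt_of_lt_of_le h'h hhv)
        exact (wFun_mono hgt.le).trans hmem.2
      have hA : ∀ ε : ℝ, 0 < ε → ∃ hA, 0 < hA ∧ hA < h ∧
          xMinus P X hA ≤ ((x + ε : ℝ) : EReal) := by
        intro ε hε
        rcases le_or_gt 0 (x + ε) with hpos' | hneg
        · refine ⟨h/2, by linarith, by linarith, le_trans (xminus_nonpos _) ?_⟩
          exact_mod_cast hpos'
        · by_contra hc
          push_neg at hc
          have hG : h ≤ G P X (x + ε) := by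
            refine forall_lt_le hhpos fun h' h'p h'h => ?_
            obtain ⟨z, hz, hzlt⟩ := lt_sSup_iff.mp (hc h' h'p h'h)
            have hmem := sminus_down hXm hXint hXmean hz hzlt.le
            rw [Gbar_coe] at hmem
            exact hmem.2
          exact absurd hG (not_le.mpr (hstrict (x + ε) hneg.le (by linarith)))
      have hB : ∀ ε : ℝ, 0 < ε → ∃ hB, 0 < hB ∧ hB < h ∧
          ((p - ε : ℝ) : EReal) ≤ xPlus P X hB := by
        intro ε hε
        rcases lt_or_ge (p - ε) 0 with hneg | hpos'
        · refine ⟨h/2, by linarith, by linarith, le_trans ?_ (xplus_nonneg _)⟩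
          exact_mod_cast hneg.le
        · by_contra hc
          push_neg at hc
          have hG : h ≤ G P X (p - ε) := by
            refine forall_lt_le hhpos fun h' h'p h'h => ?_
            obtain ⟨z, hz, hzlt⟩ := sInf_lt_iff.mp (hc h' h'p h'h)
            have hmem := splus_up hXm hXint hXmean hz hzlt.le
            rw [Gbar_coe] at hmem
            exact hmem.2
          have hle : xPlus P X h ≤ ((p - ε : ℝ) : EReal) := by
            refine xplus_le ?_ ?_
            · exact_mod_cast hpos'
            · rw [Gbar_coe]; exact hG
          rw [hxp] at hle
          have : p ≤ p - ε := by exact_mod_cast hle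
          linarith
      have hfin : p - x ≤ vr := by
        refine le_of_forall_pos_le_add fun ε hε => ?_
        obtain ⟨ha, ha0, hah, haM⟩ := hA (ε/2) (by linarith)
        obtain ⟨hb, hb0, hbh, hbP⟩ := hB (ε/2) (by linarith)
        set hc := max ha hb with hhc
        have h1 : ((p - ε/2 : ℝ) : EReal) ≤ xPlus P X hc :=
          hbP.trans (xplus_mono (le_max_right _ _))
        have h2 : xMinus P X hc ≤ ((x + ε/2 : ℝ) : EReal) :=
          (xminus_anti (le_max_left _ _)).trans haM
        have h3 : wFun P X hc ≤ v :=
          hW' hc (lt_of_lt_of_le ha0 (le_max_left _ _)) (max_lt hah hbh)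
        have h4 : ((p - ε/2 - (x + ε/2) : ℝ) : EReal) ≤ wFun P X hc := by
          rw [EReal.coe_sub, wFun]
          exact EReal.sub_le_sub h1 h2
        have h5 : ((p - ε/2 - (x + ε/2) : ℝ) : EReal) ≤ (vr : EReal) := by
          rw [hvcoe]; exact h4.trans h3
        have h6 : p - ε/2 - (x + ε/2) ≤ vr := by exact_mod_cast h5
        linarith
      have : wFun P X h = ((p - x : ℝ) : EReal) := by
        rw [wFun, hxp, hxm, EReal.coe_sub]
      rw [this, ← hvcoe]
      exact_mod_cast hfin

end Aux7
/-- Lemma `iff` of the paper. -/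
theorem mem_iff_lt_d_or_c
    (P : Measure Ω) [IsProbabilityMeasure P] (X : Ω → ℝ)
    (hXm : Measurable X) (hXint : Integrable X P)
    (hXmean : ∫ ω, X ω ∂P = 0) (hX0 : P {ω | X ω = 0} ≠ 1)
    (c d : EReal → EReal)
    (hcd : ∀ h ∈ Set.Icc (0:ℝ) (mHalf P X),
      xPlus P X h = d (wFun P X h) ∧ xMinus P X h = c (wFun P X h))
    (v : EReal) (hv : v ∈ V P X) :
    (∀ x u : ℝ, (x, u) ∈ Gplus P X →
      (((|x - recip P X x u| : ℝ) : EReal) ≤ v ↔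
        ((x : EReal) < d v ∨
          ((x : EReal) = d v ∧ hPlus P X x u ≤ hOf P X v)))) ∧
    (∀ x u : ℝ, (x, u) ∈ Gminus P X →
      (((|x - recip P X x u| : ℝ) : EReal) ≤ v ↔
        (c v < (x : EReal) ∨
          ((x : EReal) = c v ∧ hMinus P X x u ≤ hOf P X v)))) := by
  obtain ⟨h0, hh0, hv0⟩ := hv
  constructor
  · intro x u hxu
    have hx : 0 < x := hxu.1.1
    obtain ⟨hhpos, hhm, -, hstrict⟩ := hplus_facts hXm hXint hXmean hxu
    have hxp := xplus_hplus hXm hXint hXmean hxu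
    set h := hPlus P X x u with hh
    have hrec : recip P X x u = (xMinus P X h).toReal := by
      rw [recip, if_pos hx.le, H, if_pos hx.le]
    obtain ⟨hxmb, hxmt⟩ := xminus_finite hXm hXint hXmean hhm
    set r := (xMinus P X h).toReal with hr
    have hxm : xMinus P X h = (r : EReal) := (EReal.coe_toReal hxmt hxmb).symm
    have hr0 : r ≤ 0 := ereal_toReal_nonpos (xminus_nonpos h) hxmb
    have habs : |x - recip P X x u| = x - r := by
      rw [hrec, abs_of_nonneg (by linarith)]
    have hwf : wFun P X h = ((x - r : ℝ) : EReal) := by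
      rw [wFun, hxp, hxm, EReal.coe_sub]
    rw [habs, ← hwf]
    exact core_pos hXm hXint hXmean hh0 hv0 hhpos hhm hxp hstrict d
      (fun h' hmem => (hcd h' hmem).1)
  · intro x u hxu
    have hx : x < 0 := hxu.1.1
    obtain ⟨hhpos, hhm, -, hstrict⟩ := hminus_facts hXm hXint hXmean hxu
    have hxm := xminus_hminus hXm hXint hXmean hxu
    set h := hMinus P X x u with hh
    have hrec : recip P X x u = (xPlus P X h).toReal := by
      rw [recip, if_neg (not_le.mpr hx), H, if_neg (not_le.mpr hx)]
    obtain ⟨hxpb, hxpt⟩ := xplus_finite hXm hXint hXmean hhm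
    set p := (xPlus P X h).toReal with hp
    have hxp : xPlus P X h = (p : EReal) := (EReal.coe_toReal hxpt hxpb).symm
    have hp0 : 0 ≤ p := ereal_toReal_nonneg (xplus_nonneg h) hxpt
    have habs : |x - recip P X x u| = p - x := by
      rw [hrec, abs_of_nonpos (by linarith)]
      ring
    have hwf : wFun P X h = ((p - x : ℝ) : EReal) := by
      rw [wFun, hxp, hxm, EReal.coe_sub]
    rw [habs, ← hwf]
    exact core_neg hXm hXint hXmean hh0 hv0 hhpos hhm hxm hstrict c
      (fun h' hmem => (hcd h' hmem).2)

end PinelisTtest
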